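/- For every n ≥ 1, the integer n returns to the n-th column of the Hurt-Sada array at row ⌊(n+1)φ⌋ − 1 and remains there thereafter; that is, A(j,n) = n for all j ≥ ⌊(n+1)φ⌋ − 1, and A(⌊(n+1)φ⌋ − 2, n) ≠ n. -/

import Mathlib

/-- The golden ratio `(1 + √5)/2`. -/
noncomputable def phi : ℝ := (1 + Real.sqrt 5) / 2

/-- The Hurt-Sada array `A : ℕ → ℕ → ℕ`.  Row `0` is the identity sequence;
row `n+1` is obtained from row `n` by moving the entry `n+1` (located at the unique
position `p` with `A n p = n+1`) by `n+1` places to the right, shifting the jumped-over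
entries one place left. -/
noncomputable def A : ℕ → ℕ → ℕ
  | 0, k => k
  | n + 1, j =>
    let p := sInf {i | A n i = n + 1}
    if j < p then A n j
    else if j < p + (n + 1) then A n (j + 1)
    else if j = p + (n + 1) then n + 1
    else A n j

/- ## Basic facts about φ -/

lemma irr_phi : Irrational phi := by
  have h : Irrational (Real.sqrt 5) := by
    simpa using (Nat.prime_five).irrational_sqrt
  have h2 : Irrational (((1:ℚ):ℝ) + Real.sqrt 5) := h.ratCast_add 1
  have h4 := h2.div_ratCast (q := 2) (by norm_num)
  rw [phi]; convert h4 using 2 <;> norm_num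

lemma sqrt5_bounds : 2.2 < Real.sqrt 5 ∧ Real.sqrt 5 < 2.4 := by
  constructor
  · rw [show (2.2:ℝ) = Real.sqrt (2.2^2) by rw [Real.sqrt_sq]; norm_num]
    apply Real.sqrt_lt_sqrt <;> norm_num
  · rw [show (2.4:ℝ) = Real.sqrt (2.4^2) by rw [Real.sqrt_sq]; norm_num]
    apply Real.sqrt_lt_sqrt <;> norm_num

lemma phi_sq : phi * phi = phi + 1 := by
  have : Real.sqrt 5 ^ 2 = 5 := Real.sq_sqrt (by norm_num)
  unfold phi; nlinarith [this]

lemma phi_gt : (1.6:ℝ) < phi := by have := sqrt5_bounds.1; unfold phi; linarith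
lemma phi_lt : phi < (1.7:ℝ) := by have := sqrt5_bounds.2; unfold phi; linarith
lemma phi_pos : (0:ℝ) < phi := by linarith [phi_gt]
lemma phi_sub_one_pos : (0:ℝ) < phi - 1 := by linarith [phi_gt]

lemma irr_nmul (k : ℕ) (hk : k ≠ 0) : Irrational ((k:ℝ)*phi) := irr_phi.natCast_mul hk

/- ## The floor sequence -/

noncomputable def fl (k : ℕ) : ℕ := ⌊(k:ℝ) * phi⌋₊

lemma fl_lt (k : ℕ) (hk : 1 ≤ k) : (fl k : ℝ) < k * phi := by
  have hpos : (0:ℝ) ≤ k*phi := by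
    have := phi_pos; positivity
  rcases (Nat.floor_le hpos).lt_or_eq with h | h
  · exact h
  · exact absurd ⟨(fl k : ℚ), by exact_mod_cast h⟩ (irr_nmul k (by omega))

lemma lt_fl_succ (k : ℕ) : (k:ℝ) * phi < fl k + 1 := Nat.lt_floor_add_one _

lemma le_fl_iff {a b : ℕ} (ha : 1 ≤ a) : b ≤ fl a ↔ (b:ℝ) < a * phi := by
  constructor
  · intro h
    calc (b:ℝ) ≤ (fl a : ℝ) := by exact_mod_cast h
      _ < a * phi := fl_lt a ha
  · intro h; exact Nat.le_floor h.le

lemma fl_le_iff {a b : ℕ} : fl a ≤ b ↔ (a:ℝ) * phi < b + 1 := by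
  constructor
  · intro h
    calc (a:ℝ) * phi < fl a + 1 := lt_fl_succ a
      _ ≤ b + 1 := by
        have hb : (fl a : ℝ) ≤ b := by exact_mod_cast h
        linarith
  · intro h
    have hpos : (0:ℝ) ≤ a*phi := by have := phi_pos; positivity
    have : fl a < b + 1 := by
      rw [fl]
      refine (Nat.floor_lt hpos).2 ?_
      push_cast; exact h
    omega

/- arithmetic lemmas -/

lemma AR1 {k : ℕ} (hk : 2 ≤ k) : k + 1 ≤ fl k := by
  rw [le_fl_iff (by omega)]
  have h2 : (2:ℝ) ≤ k := by exact_mod_cast hk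
  push_cast
  nlinarith [phi_gt]

lemma AR2 (n : ℕ) : fl (n+2) ≤ 2*n+3 := by
  rw [fl_le_iff]
  have h0 : (0:ℝ) ≤ (n:ℝ) := Nat.cast_nonneg n
  push_cast
  nlinarith [phi_lt]

lemma AR3 {j n : ℕ} (h : j + n + 3 ≤ fl (n+2)) : fl (j+1) ≤ n+1 := by
  rw [le_fl_iff (by omega)] at h
  rw [fl_le_iff]
  push_cast at h ⊢
  have key : ((j:ℝ)+1) < ((n:ℝ)+2) * (phi - 1) := by nlinarith []
  nlinarith [mul_lt_mul_of_pos_right key phi_pos, phi_sq]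

lemma AR4 {j n : ℕ} (h : fl (j+1) ≤ n+1) : j + n + 3 ≤ fl (n+2) := by
  rw [fl_le_iff] at h
  rw [le_fl_iff (by omega)]
  push_cast at h ⊢
  nlinarith [mul_lt_mul_of_pos_right h phi_sub_one_pos, phi_sq]

lemma AR5 {p n : ℕ} (hp : p + (n+2) = fl (n+2)) : n + 2 ≤ fl (p+1) := by
  rw [le_fl_iff (by omega)]
  have hc : (p:ℝ) + (n+2) = fl (n+2) := by exact_mod_cast hp
  have h2 := lt_fl_succ (n+2)
  push_cast at hc h2 ⊢
  have key : ((n:ℝ)+2) * (phi - 1) < (p:ℝ) + 1 := by nlinarith []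
  nlinarith [mul_lt_mul_of_pos_right key phi_pos, phi_sq]

lemma AR6a {v n : ℕ} (h : fl (v+1) = n+2) : fl (n+2) ≤ v + n + 2 := by
  have h1 : (n+2:ℕ) ≤ fl (v+1) := h.ge
  rw [le_fl_iff (by omega)] at h1
  rw [fl_le_iff]
  push_cast at h1 ⊢
  nlinarith [mul_lt_mul_of_pos_right h1 phi_sub_one_pos, phi_sq]

lemma AR6b {v n : ℕ} (hv : v ≤ n) : v + 2 ≤ fl (n+2) := by
  rw [le_fl_iff (by omega)]
  have hc : (v:ℝ) ≤ n := by exact_mod_cast hv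
  push_cast
  nlinarith [phi_gt]

lemma AR7 {v n : ℕ} (h : n + 3 ≤ fl (v+1)) : fl (n+2) ≤ fl (v+1) + v := by
  have h1 := h
  rw [le_fl_iff (by omega)] at h1
  have h2 := lt_fl_succ (v+1)
  rw [fl_le_iff]
  have h0 : ((n:ℝ)+3) ≤ (fl (v+1) : ℝ) := by exact_mod_cast h
  push_cast at h1 h2 ⊢
  have key : ((n:ℝ)+3)*(phi-1) < (v:ℝ)+1 := by
    nlinarith [mul_lt_mul_of_pos_right h1 phi_sub_one_pos, phi_sq]
  nlinarith [key, h0, phi_gt]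

lemma fl_mono {a b : ℕ} (ha : 1 ≤ a) (hab : a < b) : fl a < fl b := by
  have h1 := fl_lt a ha
  have h2 := lt_fl_succ b
  have hc : (a:ℝ) ≤ (b:ℝ) - 1 := by
    have : (a:ℝ) + 1 ≤ b := by exact_mod_cast hab
    linarith
  have : (a:ℝ) * phi ≤ ((b:ℝ) - 1) * phi :=
    mul_le_mul_of_nonneg_right hc phi_pos.le
  have : ((fl a : ℕ):ℝ) < ((fl b : ℕ):ℝ) := by nlinarith [phi_gt]
  exact_mod_cast this

/- ## positions -/

noncomputable def posn (n v : ℕ) : ℕ := max v (fl (v+1) + v - (n+1))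

lemma posn_ret {n v : ℕ} (h : fl (v+1) ≤ n+1) : posn n v = v := by
  unfold posn; omega

lemma posn_tr {n v : ℕ} (h : n+2 ≤ fl (v+1)) :
    posn n v + (n+1) = fl (v+1) + v ∧ v < posn n v := by
  unfold posn; omega

def NS (n j : ℕ) : Prop := ∀ v ≤ n, posn n v ≠ j

structure RowInv (n : ℕ) : Prop where
  pos : ∀ v ≤ n, A n (posn n v) = v
  bij : Function.Bijective (A n)
  mono : ∀ ⦃j k : ℕ⦄, j < k → NS n j → NS n k → A n j < A n k

/- position of n+1 in row n -/
lemma pfind {n p : ℕ} (h : RowInv n) (hp : p + (n+2) = fl (n+2)) : A n p = n + 1 := by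
  have hple : p ≤ n + 1 := by have := AR2 n; omega
  have claimA : ∀ j, j < p → A n j = j ∧ fl (j+1) ≤ n+1 := by
    intro j hj
    have hret : fl (j+1) ≤ n+1 := AR3 (by omega)
    have hj_le : j ≤ n := by omega
    have := h.pos j hj_le
    rw [posn_ret hret] at this
    exact ⟨this, hret⟩
  have hNSp : NS n p := by
    intro v hv hne
    rcases le_or_gt (fl (v+1)) (n+1) with hc | hc
    · rw [posn_ret hc] at hne
      subst hne
      have := AR5 hp
      omega
    · obtain ⟨e1, e2⟩ := posn_tr hc
      rw [hne] at e1 e2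
      -- fl(v+1)+v = p+n+1, fl(v+1) ≥ n+2 ⇒ v+1 ≤ p ⇒ v < p ⇒ returned, contra
      have hvp : v < p := by omega
      have := (claimA v hvp).2
      omega
  have hval : n + 1 ≤ A n p := by
    by_contra hcon
    push_neg at hcon
    have hvle : A n p ≤ n := by omega
    have := h.pos (A n p) hvle
    have := h.bij.injective this
    exact hNSp (A n p) hvle this
  obtain ⟨i, hi⟩ := h.bij.surjective (n+1)
  have hip : ¬ i < p := by
    intro hip
    rw [(claimA i hip).1] at hi
    omega
  rcases lt_or_ge p i with hlt | hge
  · exfalso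
    have NSi : NS n i := by
      intro v hv hne
      rw [← hne, h.pos v hv] at hi
      omega
    have := h.mono hlt hNSp NSi
    omega
  · have : p = i := by omega
    rw [this]; exact hi

lemma A_succ {n p : ℕ} (h : RowInv n) (hp : p + (n+2) = fl (n+2)) (j : ℕ) :
    A (n+1) j = if j < p then A n j
      else if j < p + (n+1) then A n (j+1)
      else if j = p + (n+1) then n + 1
      else A n j := by
  have h1 : A n p = n + 1 := pfind h hp
  have hset : {i | A n i = n + 1} = {p} := by
    ext i
    simp only [Set.mem_setOf_eq, Set.mem_singleton_iff]
    exact ⟨fun hi => h.bij.injective (hi.trans h1.symm), fun hi => hi ▸ h1⟩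
  rw [A]
  simp only [hset, csInf_singleton]

/- the shift permutation -/
def sig (p P j : ℕ) : ℕ := if j < p then j else if j < P then j + 1 else if j = P then p else j

lemma sig_bij {p P : ℕ} (h : p ≤ P) : Function.Bijective (sig p P) := by
  constructor
  · intro a b hab
    unfold sig at hab
    split_ifs at hab <;> omega
  · intro b
    refine ⟨if b < p then b else if b = p then P else if b ≤ P then b - 1 else b, ?_⟩
    unfold sig
    split_ifs <;> omega

lemma rowInv_zero : RowInv 0 where
  pos := by
    intro v hv
    interval_cases v
    have h1 : fl (0+1) ≤ 0+1 := by
      rw [fl_le_iff]; push_cast; nlinarith [phi_lt]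
    rw [posn_ret h1]
    rw [A]
  bij := by
    have : A 0 = id := by funext k; rw [A]; rfl
    rw [this]; exact Function.bijective_id
  mono := by
    intro j k hjk _ _
    rw [A, A]
    simpa using hjk

lemma rowInv_step {n : ℕ} (h : RowInv n) : RowInv (n+1) := by
  have hF1 : n + 3 ≤ fl (n+2) := AR1 (by omega)
  obtain ⟨p, hp⟩ : ∃ p, p + (n+2) = fl (n+2) := ⟨fl (n+2) - (n+2), by omega⟩
  set P := p + (n+1) with hP
  have hAn := A_succ h hp
  have hAnp : A n p = n + 1 := pfind h hp
  have hAsig : ∀ j, A (n+1) j = A n (sig p P j) := by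
    intro j
    rw [hAn j]
    unfold sig
    split_ifs with h1 h2 h3 <;> try rfl
    exact hAnp.symm
  -- position relation for v ≤ n
  have posrel : ∀ v ≤ n, sig p P (posn (n+1) v) = posn n v ∧ posn (n+1) v < P := by
    intro v hv
    rcases lt_or_ge (fl (v+1)) (n+2) with hc | hc
    · -- returned at row n
      have hretn : fl (v+1) ≤ n+1 := by omega
      have hret1 : fl (v+1) ≤ n+2 := by omega
      rw [posn_ret hretn, posn_ret hret1]
      have hvp : v < p := by have := AR4 hretn; omega
      constructor
      · unfold sig; rw [if_pos hvp]
      · omega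
    · rcases Nat.eq_or_lt_of_le hc with hc2 | hc2
      · -- arriving: fl (v+1) = n+2
        have heq : fl (v+1) = n + 2 := hc2.symm
        rw [posn_ret (by omega)]
        obtain ⟨e1, _⟩ := posn_tr hc
        have hposn : posn n v = v + 1 := by omega
        have hlow : p ≤ v := by have := AR6a heq; omega
        have hhigh : v < P := by have := AR6b hv; omega
        rw [hposn]
        constructor
        · unfold sig
          rw [if_neg (by omega), if_pos hhigh]
        · exact hhigh
      · -- still transit: fl (v+1) ≥ n+3
        have hc3 : n + 3 ≤ fl (v+1) := hc2
        obtain ⟨e1, e2⟩ := posn_tr hc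
        obtain ⟨f1, f2⟩ := posn_tr (show (n+1)+2 ≤ fl (v+1) by omega)
        have hstep : posn n v = posn (n+1) v + 1 := by omega
        have hlow : p ≤ posn (n+1) v := by
          have := AR7 hc3; omega
        have hupper : fl (v+1) < fl (n+2) := fl_mono (by omega) (by omega)
        have hhigh : posn (n+1) v < P := by omega
        constructor
        · unfold sig
          rw [if_neg (by omega), if_pos hhigh, hstep]
        · exact hhigh
  have hfla : fl (n+1+1) = fl (n+2) := by congr 1
  have posnP : posn (n+1) (n+1) = P := by
    obtain ⟨e1, _⟩ := posn_tr (show (n+1)+2 ≤ fl ((n+1)+1) by rw [hfla]; omega)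
    rw [hfla] at e1
    omega
  refine ⟨?_, ?_, ?_⟩
  · -- pos
    intro v hv
    rcases lt_or_ge v (n+1) with hvn | hvn
    · have hvn' : v ≤ n := by omega
      rw [hAsig, (posrel v hvn').1]
      exact h.pos v hvn'
    · have hveq : v = n + 1 := by omega
      subst hveq
      rw [posnP, hAn]
      rw [if_neg (by omega), if_neg (by omega), if_pos rfl]
  · -- bij
    have : A (n+1) = (A n) ∘ (sig p P) := funext hAsig
    rw [this]
    exact h.bij.comp (sig_bij (by omega))
  · -- mono
    intro j k hjk NSj NSk
    have hjP : j ≠ P := fun e => NSj (n+1) le_rfl (by rw [posnP, e])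
    have hkP : k ≠ P := fun e => NSk (n+1) le_rfl (by rw [posnP, e])
    have hNSsig : ∀ m, m ≠ P → NS (n+1) m → NS n (sig p P m) := by
      intro m hmP hNSm v hv hne
      obtain ⟨e1, e2⟩ := posrel v hv
      have : sig p P (posn (n+1) v) = sig p P m := by rw [e1, hne]
      have := (sig_bij (show p ≤ P by omega)).injective this
      exact hNSm v (by omega) this
    have hsiglt : sig p P j < sig p P k := by
      unfold sig; split_ifs <;> omega
    have := h.mono hsiglt (hNSsig j hjP NSj) (hNSsig k hkP NSk)
    rw [hAsig j, hAsig k]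
    exact this

lemma rowInv_all (n : ℕ) : RowInv n := by
  induction n with
  | zero => exact rowInv_zero
  | succ n ih => exact rowInv_step ih

theorem hurt_sada_returns (n : ℕ) (hn : 1 ≤ n) :
    (∀ j, ⌊((n : ℝ) + 1) * phi⌋₊ - 1 ≤ j → A j n = n) ∧
      A (⌊((n : ℝ) + 1) * phi⌋₊ - 2) n ≠ n := by
  have hT : ⌊((n : ℝ) + 1) * phi⌋₊ = fl (n+1) := by
    unfold fl; congr 1; push_cast; ring
  have hfl : n + 2 ≤ fl (n+1) := AR1 (by omega)
  rw [hT]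
  constructor
  · intro j hj
    have hnj : n ≤ j := by omega
    have hpos := (rowInv_all j).pos n hnj
    rw [posn_ret (show fl (n+1) ≤ j+1 by omega)] at hpos
    exact hpos
  · intro hcon
    set j := fl (n+1) - 2 with hj
    have hj2 : j + 2 = fl (n+1) := by omega
    have hnj : n ≤ j := by omega
    obtain ⟨e1, e2⟩ := posn_tr (show j + 2 ≤ fl (n+1) by omega)
    have hposn : posn j n = n + 1 := by omega
    have hpos := (rowInv_all j).pos n hnj
    rw [hposn] at hpos
    have : n = n + 1 := (rowInv_all j).bij.injective (hcon.trans hpos.symm)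
    omega
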